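/- arXiv:2209.11740 — 2 statements merged into one kernel-verified Lean document; each statement's English description precedes it below -/
import Mathlib

section
/- Two successive subsampled convolutions compose into a single subsampled convolution: for any U, V ∈ l²(ℤ²) and s, t ∈ ℕ*, ((U ↓ s) ∗ V) ↓ t = (U ∗ (V ↑ s)) ↓ (s t), where (X ↓ s)[n] := X[s n] and (X ↑ s)[n] := X[n/s] if n/s ∈ ℤ², else 0. -/
open scoped Classical

noncomputable section

abbrev Zsq := Fin 2 → ℤ

/-- Discrete convolution on `l²(ℤ²)`. -/
def dconv (U V : Zsq → ℂ) (n : Zsq) : ℂ := ∑' k : Zsq, U k * V (n - k)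

/-- Subsampling `(X ↓ m)[n] := X[mn]`. -/
def dsample (m : ℕ) (X : Zsq → ℂ) (n : Zsq) : ℂ := X (m • n)

/-- Upsampling `(X ↑ m)[n] := X[n/m]` if `m ∣ n` componentwise, else `0`. -/
def usample (m : ℕ) (X : Zsq → ℂ) (n : Zsq) : ℂ :=
  if ∀ i, (m : ℤ) ∣ n i then X fun i => n i / (m : ℤ) else 0

/-- `((U ↓ s) ∗ V) ↓ t = (U ∗ (V ↑ s)) ↓ (st)`. -/
theorem stmt8 (U V : Zsq → ℂ) (hV : (Function.support V).Finite)
    (s t : ℕ) (hs : 0 < s) (ht : 0 < t) :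
    dsample t (dconv (dsample s U) V) = dsample (s * t) (dconv U (usample s V)) := by
  funext n
  have hsz : (s : ℤ) ≠ 0 := by exact_mod_cast hs.ne'
  simp only [dsample, dconv]
  set f : Zsq → ℂ := fun k => U k * usample s V ((s * t) • n - k) with hf
  have happ : ∀ (k : Zsq) (i : Fin 2), ((s * t) • n - k) i = (s : ℤ) * (t * n i) - k i := by
    intro k i
    simp only [Pi.sub_apply, Pi.smul_apply, nsmul_eq_mul]
    push_cast
    simp only [Pi.mul_apply, Pi.natCast_apply]
    push_cast
    ring
  have hinj : Function.Injective (fun m : Zsq => (s : ℕ) • m) := by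
    intro a b hab
    funext i
    have := congrFun hab i
    simp only [Pi.smul_apply, nsmul_eq_mul] at this
    exact mul_left_cancel₀ hsz this
  have hsupp : Function.support f ⊆ Set.range (fun m : Zsq => (s : ℕ) • m) := by
    intro k hk
    by_contra hrange
    apply hk
    have hdvd : ¬ ∀ i, (s : ℤ) ∣ ((s * t) • n - k) i := by
      intro h
      apply hrange
      refine ⟨fun i => k i / s, ?_⟩
      funext i
      have h1 : (s : ℤ) ∣ k i := by
        have h0 := h i
        rw [happ] at h0
        have h2 : (s : ℤ) ∣ (s : ℤ) * (t * n i) := Dvd.intro _ rfl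
        exact (dvd_sub_right h2).mp h0
      simp only [Pi.smul_apply, nsmul_eq_mul]
      exact Int.mul_ediv_cancel' h1
    simp only [hf, usample, if_neg hdvd, mul_zero]
  have key : ∑' m : Zsq, f ((s : ℕ) • m) = ∑' k, f k := hinj.tsum_eq hsupp
  rw [← key]
  congr 1
  funext m
  simp only [hf]
  congr 1
  have hdvd : ∀ i, (s : ℤ) ∣ ((s * t) • n - (s : ℕ) • m) i := by
    intro i
    rw [happ]
    simp only [Pi.smul_apply, nsmul_eq_mul]
    exact ⟨t * n i - m i, by ring⟩
  simp only [usample, if_pos hdvd]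
  congr 1
  funext i
  rw [happ]
  simp only [Pi.sub_apply, Pi.smul_apply, nsmul_eq_mul]
  rw [show (s : ℤ) * (t * n i) - s * m i = s * (t * n i - m i) by ring,
    Int.mul_ediv_cancel_left _ hsz]
  simp only [Pi.sub_apply, Pi.smul_apply, Pi.mul_apply, Pi.natCast_apply, nsmul_eq_mul]
end
end

section
/- Let z₀, …, z_{N−1} be points on the unit circle S¹ ordered by increasing argument θ₀ ≤ … ≤ θ_{N−1} in [0, 2π), with θ_N := θ₀ + 2π, and let Δ_i := θ_{i+1} − θ_i. Let Z be a uniformly distributed random variable on S¹ and define G_max := max_{0 ≤ k < N} Re(Z* z_k). Then E[G_max] = (1/π) Σ_{i=0}^{N−1} sin(Δ_i/2) and E[G_max²] = 1/2 + (1/(4π)) Σ_{i=0}^{N−1} sin(Δ_i). -/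
open MeasureTheory Real

noncomputable section

/-- `G_max(θ) := max_k Re( conj(e^{iθ}) z_k )` where `z_k = e^{i t_k}`. -/
def gmax (N : ℕ) (t : Fin N → ℝ) (θ : ℝ) : ℝ :=
  ⨆ k : Fin N,
    ((starRingEnd ℂ) (Complex.exp (θ * Complex.I)) * Complex.exp ((t k : ℂ) * Complex.I)).re

/-- Angular gaps `Δ_i := θ_{i+1} − θ_i`, with `θ_N := θ₀ + 2π`. -/
def gap (N : ℕ) (t : Fin N → ℝ) (i : Fin N) : ℝ :=
  (if h : (i : ℕ) + 1 < N then t ⟨(i : ℕ) + 1, h⟩ else t ⟨0, Nat.pos_of_ne_zero (by omega)⟩ + 2 * π) - t i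

lemma cos_le_cos_of' (u v : ℝ) (hu : 0 ≤ u) (huv : u ≤ v) (h2 : u + v ≤ 2*π) :
    Real.cos v ≤ Real.cos u := by
  have hupi : u ≤ π := by nlinarith [Real.pi_pos]
  rcases le_or_gt v π with hv | hv
  · exact Real.cos_le_cos_of_nonneg_of_le_pi hu hv huv
  · have h : Real.cos v = Real.cos (2*π - v) := by
      rw [Real.cos_sub, Real.cos_two_pi, Real.sin_two_pi]; ring
    rw [h]
    exact Real.cos_le_cos_of_nonneg_of_le_pi hu (by linarith) (by linarith)

lemma cos_bound (δ δ' x : ℝ) (hδ : 0 ≤ δ) (hδ' : 0 ≤ δ') (h1 : δ ≤ x) (h2 : x ≤ 2*π - δ') :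
    Real.cos x ≤ max (Real.cos δ) (Real.cos δ') := by
  rcases le_total δ δ' with h | h
  · exact le_trans (cos_le_cos_of' δ x hδ h1 (by linarith)) (le_max_left _ _)
  · exact le_trans (cos_le_cos_of' δ' x hδ' (by linarith) (by linarith)) (le_max_right _ _)

lemma term_re (θ c : ℝ) :
    ((starRingEnd ℂ) (Complex.exp ((θ:ℂ) * Complex.I)) * Complex.exp ((c:ℂ) * Complex.I)).re
      = Real.cos (θ - c) := by
  rw [← Complex.exp_conj]
  have h1 : (starRingEnd ℂ) ((θ:ℂ) * Complex.I) = -(θ:ℂ) * Complex.I := by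
    simp [Complex.conj_I]
  rw [h1, ← Complex.exp_add]
  have h2 : -(θ:ℂ) * Complex.I + (c:ℂ) * Complex.I = ((c - θ : ℝ) : ℂ) * Complex.I := by
    push_cast; ring
  rw [h2, Complex.exp_ofReal_mul_I_re, ← Real.cos_neg, neg_sub]

lemma gmax_eq (N : ℕ) (t : Fin N → ℝ) (θ : ℝ) :
    gmax N t θ = ⨆ k : Fin N, Real.cos (θ - t k) :=
  iSup_congr fun k => term_re θ (t k)

lemma gmax_sup' (N : ℕ) (hN : 0 < N) (t : Fin N → ℝ) (θ : ℝ) :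
    gmax N t θ = Finset.univ.sup'
      (@Finset.univ_nonempty _ _ (Fin.pos_iff_nonempty.mp hN))
      (fun k : Fin N => Real.cos (θ - t k)) := by
  haveI : Nonempty (Fin N) := Fin.pos_iff_nonempty.mp hN
  rw [gmax_eq, ← Finset.sup'_univ_eq_ciSup]

lemma gmax_continuous (N : ℕ) (hN : 0 < N) (t : Fin N → ℝ) : Continuous (gmax N t) := by
  haveI : Nonempty (Fin N) := Fin.pos_iff_nonempty.mp hN
  have h : gmax N t = fun θ => Finset.univ.sup'
      (@Finset.univ_nonempty _ _ (Fin.pos_iff_nonempty.mp hN))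
      (fun k : Fin N => Real.cos (θ - t k)) := funext (gmax_sup' N hN t)
  rw [h]
  exact Continuous.finset_sup'_apply _ fun i _ =>
    (Real.continuous_cos.comp (continuous_id.sub continuous_const))

lemma gmax_periodic (N : ℕ) (t : Fin N → ℝ) : Function.Periodic (gmax N t) (2*π) := by
  intro θ
  rw [gmax_eq, gmax_eq]
  refine iSup_congr fun k => ?_
  have : θ + 2*π - t k = (θ - t k) + 2*π := by ring
  rw [this, Real.cos_add_two_pi]

lemma arc_integrals (f : ℝ → ℝ) (hf : Continuous f) (a b : ℝ) (hab : a ≤ b) (hb : b - a ≤ 2*π)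
    (hfe : ∀ θ ∈ Set.Icc a b, f θ = max (Real.cos (θ - a)) (Real.cos (b - θ))) :
    (∫ θ in a..b, f θ) = 2 * Real.sin ((b-a)/2) ∧
    (∫ θ in a..b, f θ ^ 2) = (b-a)/2 + Real.sin (b-a) / 2 := by
  set m : ℝ := (a+b)/2 with hm
  have ham : a ≤ m := by rw [hm]; linarith
  have hmb : m ≤ b := by rw [hm]; linarith
  have h1 : ∀ θ ∈ Set.uIcc a m, f θ = Real.cos (θ - a) := by
    intro θ hθ
    rw [Set.uIcc_of_le ham] at hθ
    obtain ⟨hθ1, hθ2⟩ := hθ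
    rw [hfe θ ⟨hθ1, hθ2.trans hmb⟩]
    exact max_eq_left (cos_le_cos_of' (θ - a) (b - θ) (by linarith) (by rw [hm] at hθ2; linarith)
      (by linarith))
  have h2 : ∀ θ ∈ Set.uIcc m b, f θ = Real.cos (θ - b) := by
    intro θ hθ
    rw [Set.uIcc_of_le hmb] at hθ
    obtain ⟨hθ1, hθ2⟩ := hθ
    rw [hfe θ ⟨ham.trans hθ1, hθ2⟩]
    have : Real.cos (b - θ) = Real.cos (θ - b) := by rw [← Real.cos_neg, neg_sub]
    rw [← this]
    exact max_eq_right (cos_le_cos_of' (b - θ) (θ - a) (by linarith) (by rw [hm] at hθ1; linarith)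
      (by linarith))
  have hsplit : ∀ g : ℝ → ℝ, Continuous g →
      (∫ θ in a..b, g θ) = (∫ θ in a..m, g θ) + (∫ θ in m..b, g θ) := fun g hg =>
    (intervalIntegral.integral_add_adjacent_intervals (hg.intervalIntegrable a m)
      (hg.intervalIntegrable m b)).symm
  have hma : m - a = (b-a)/2 := by rw [hm]; ring
  have hmb2 : m - b = -((b-a)/2) := by rw [hm]; ring
  constructor
  · rw [hsplit f hf]
    rw [intervalIntegral.integral_congr h1, intervalIntegral.integral_congr h2]
    rw [intervalIntegral.integral_comp_sub_right (fun x => Real.cos x) a,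
        intervalIntegral.integral_comp_sub_right (fun x => Real.cos x) b]
    rw [integral_cos, integral_cos]
    rw [sub_self, sub_self, hma, hmb2]
    simp [Real.sin_neg]
    ring
  · rw [hsplit (fun θ => f θ ^ 2) (hf.pow 2)]
    have h1' : ∀ θ ∈ Set.uIcc a m, f θ ^ 2 = Real.cos (θ - a) ^ 2 := fun θ hθ => by rw [h1 θ hθ]
    have h2' : ∀ θ ∈ Set.uIcc m b, f θ ^ 2 = Real.cos (θ - b) ^ 2 := fun θ hθ => by rw [h2 θ hθ]
    rw [intervalIntegral.integral_congr h1', intervalIntegral.integral_congr h2']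
    rw [intervalIntegral.integral_comp_sub_right (fun x => Real.cos x ^ 2) a,
        intervalIntegral.integral_comp_sub_right (fun x => Real.cos x ^ 2) b]
    rw [integral_cos_sq, integral_cos_sq]
    rw [sub_self, sub_self, hma, hmb2]
    have hs2 : Real.sin (b - a) = 2 * Real.sin ((b-a)/2) * Real.cos ((b-a)/2) := by
      rw [← Real.sin_two_mul]; ring_nf
    simp [Real.sin_neg, Real.cos_neg]
    rw [hs2]; ring

def sN (N : ℕ) (hN : 0 < N) (t : Fin N → ℝ) (j : ℕ) : ℝ :=
  if h : j < N then t ⟨j, h⟩ else t ⟨0, hN⟩ + 2*π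

lemma gmax_on_arc (N : ℕ) (hN : 0 < N) (t : Fin N → ℝ) (hmono : Monotone t)
    (hrange : ∀ i, t i ∈ Set.Ico (0:ℝ) (2*π)) (i : ℕ) (hi : i < N) (θ : ℝ)
    (hθ1 : sN N hN t i ≤ θ) (hθ2 : θ ≤ sN N hN t (i+1)) :
    gmax N t θ = max (Real.cos (θ - sN N hN t i)) (Real.cos (sN N hN t (i+1) - θ)) := by
  haveI : Nonempty (Fin N) := Fin.pos_iff_nonempty.mp hN
  have hpi := Real.pi_pos
  set a := sN N hN t i with ha
  set b := sN N hN t (i+1) with hb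
  have hai : a = t ⟨i, hi⟩ := by rw [ha, sN, dif_pos hi]
  have ht0 : (0:ℝ) ≤ t ⟨0, hN⟩ := (hrange _).1
  have hbub : b ≤ t ⟨0, hN⟩ + 2*π := by
    rw [hb, sN]
    split
    · next h => linarith [(hrange ⟨i+1, h⟩).2, ht0]
    · exact le_refl _
  rw [gmax_eq]
  apply le_antisymm
  · apply ciSup_le
    intro k
    rcases le_or_gt (k : ℕ) i with hk | hk
    · have htka : t k ≤ a := by rw [hai]; exact hmono (by simpa [Fin.le_def] using hk)
      have ht0k : t ⟨0, hN⟩ ≤ t k := hmono (by simp [Fin.le_def])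
      exact cos_bound (θ - a) (b - θ) (θ - t k) (by linarith) (by linarith) (by linarith)
        (by linarith)
    · have hik : i + 1 < N := lt_of_le_of_lt hk k.isLt
      have hbk : b ≤ t k := by
        rw [hb, sN, dif_pos hik]; exact hmono (by simpa [Fin.le_def] using hk)
      have htk2 : t k < 2*π := (hrange k).2
      have hta : 0 ≤ a := by rw [hai]; exact (hrange _).1
      have hc : Real.cos (θ - t k) = Real.cos (t k - θ) := by rw [← Real.cos_neg, neg_sub]
      rw [hc, max_comm]
      exact cos_bound (b - θ) (θ - a) (t k - θ) (by linarith) (by linarith) (by linarith)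
        (by linarith)
  · have hbdd : BddAbove (Set.range fun k : Fin N => Real.cos (θ - t k)) :=
      (Set.finite_range _).bddAbove
    apply max_le
    · rw [hai]
      exact le_ciSup hbdd ⟨i, hi⟩
    · by_cases h : i + 1 < N
      · have hbv : b = t ⟨i+1, h⟩ := by rw [hb, sN, dif_pos h]
        have := le_ciSup hbdd (⟨i+1, h⟩ : Fin N)
        rw [hbv, ← Real.cos_neg, neg_sub]
        exact this
      · have hbv : b = t ⟨0, hN⟩ + 2*π := by rw [hb, sN, dif_neg h]
        have hc : Real.cos (b - θ) = Real.cos (θ - t ⟨0, hN⟩) := by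
          rw [← Real.cos_neg, neg_sub, hbv]
          have : θ - (t ⟨0, hN⟩ + 2*π) = (θ - t ⟨0, hN⟩) - 2*π := by ring
          rw [this, Real.cos_sub_two_pi]
        rw [hc]
        exact le_ciSup hbdd ⟨0, hN⟩

/-- for `Z` uniform on `S¹`,
`E[G_max] = (1/π) Σ sin(Δ_i/2)` and `E[G_max²] = 1/2 + (1/(4π)) Σ sin Δ_i`. -/
theorem stmt10 (N : ℕ) (hN : 0 < N) (t : Fin N → ℝ) (hmono : Monotone t)
    (hrange : ∀ i, t i ∈ Set.Ico (0 : ℝ) (2 * π)) :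
    ((1 / (2 * π)) * ∫ θ in Set.Ico (0 : ℝ) (2 * π), gmax N t θ =
      (1 / π) * ∑ i : Fin N, Real.sin (gap N t i / 2)) ∧
    ((1 / (2 * π)) * ∫ θ in Set.Ico (0 : ℝ) (2 * π), gmax N t θ ^ 2 =
      1 / 2 + (1 / (4 * π)) * ∑ i : Fin N, Real.sin (gap N t i)) := by
  haveI : Nonempty (Fin N) := Fin.pos_iff_nonempty.mp hN
  have hpi := Real.pi_pos
  have hpi0 := Real.pi_ne_zero
  set s := sN N hN t with hs
  have ht0 : (0:ℝ) ≤ t ⟨0, hN⟩ := (hrange _).1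
  have hsle : ∀ i, i < N → s i ≤ s (i+1) := by
    intro i hi
    rw [hs]; unfold sN
    rw [dif_pos hi]
    split
    · next h => exact hmono (by simp [Fin.le_def])
    · next h => linarith [(hrange ⟨i, hi⟩).2]
  have hgap2 : ∀ i, i < N → s (i+1) - s i ≤ 2*π := by
    intro i hi
    rw [hs]; unfold sN
    rw [dif_pos hi]
    split
    · next h => linarith [(hrange ⟨i+1, h⟩).2, (hrange ⟨i, hi⟩).1]
    · next h =>
        have : t ⟨0, hN⟩ ≤ t ⟨i, hi⟩ := hmono (by simp [Fin.le_def])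
        linarith
  have hcont := gmax_continuous N hN t
  have harc := fun (i : ℕ) (hi : i < N) =>
    arc_integrals (gmax N t) hcont (s i) (s (i+1)) (hsle i hi) (hgap2 i hi)
      (fun θ hθ => gmax_on_arc N hN t hmono hrange i hi θ hθ.1 hθ.2)
  have hs0 : s 0 = t ⟨0, hN⟩ := by rw [hs]; unfold sN; rw [dif_pos hN]
  have hsN : s N = s 0 + 2*π := by
    rw [hs]; unfold sN; rw [dif_neg (lt_irrefl N), dif_pos hN]
  have base : ∀ g : ℝ → ℝ, Continuous g → Function.Periodic g (2*π) →
      (∫ θ in Set.Ico (0:ℝ) (2*π), g θ) = ∑ i ∈ Finset.range N, ∫ θ in s i..s (i+1), g θ := by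
    intro g hg hp
    rw [MeasureTheory.integral_Ico_eq_integral_Ioo, ← MeasureTheory.integral_Ioc_eq_integral_Ioo,
        ← intervalIntegral.integral_of_le (by linarith)]
    calc (∫ θ in (0:ℝ)..(2*π), g θ) = ∫ θ in (0:ℝ)..(0+2*π), g θ := by norm_num
      _ = ∫ θ in (s 0)..(s 0 + 2*π), g θ := hp.intervalIntegral_add_eq 0 (s 0)
      _ = ∫ θ in (s 0)..(s N), g θ := by rw [hsN]
      _ = ∑ i ∈ Finset.range N, ∫ θ in s i..s (i+1), g θ :=
          (intervalIntegral.sum_integral_adjacent_intervals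
            fun k _ => hg.intervalIntegrable _ _).symm
  have hgapeq : ∀ i : Fin N, gap N t i = s ((i:ℕ)+1) - s (i:ℕ) := by
    intro i
    rw [hs]; unfold gap sN
    rw [dif_pos i.isLt]
  have htel : ∑ i ∈ Finset.range N, (s (i+1) - s i) = 2*π := by
    rw [Finset.sum_range_sub s, hsN]; ring
  constructor
  · rw [base (gmax N t) hcont (gmax_periodic N t)]
    rw [Finset.sum_congr rfl fun i hi => (harc i (Finset.mem_range.mp hi)).1]
    have hsum1 : ∑ i : Fin N, Real.sin (gap N t i / 2)
        = ∑ i ∈ Finset.range N, Real.sin ((s (i+1) - s i)/2) := by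
      rw [← Fin.sum_univ_eq_sum_range (fun j => Real.sin ((s (j+1) - s j)/2)) N]
      exact Finset.sum_congr rfl fun i _ => by rw [hgapeq i]
    rw [hsum1, Finset.mul_sum, Finset.mul_sum]
    exact Finset.sum_congr rfl fun i _ => by field_simp
  · rw [base (fun θ => gmax N t θ ^ 2) (hcont.pow 2)
      (fun θ => by simp only [gmax_periodic N t θ])]
    rw [Finset.sum_congr rfl fun i hi => (harc i (Finset.mem_range.mp hi)).2]
    have hsum2 : ∑ i : Fin N, Real.sin (gap N t i)
        = ∑ i ∈ Finset.range N, Real.sin (s (i+1) - s i) := by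
      rw [← Fin.sum_univ_eq_sum_range (fun j => Real.sin (s (j+1) - s j)) N]
      exact Finset.sum_congr rfl fun i _ => by rw [hgapeq i]
    rw [hsum2, Finset.sum_add_distrib, ← Finset.sum_div, ← Finset.sum_div, htel]
    field_simp
    ring
end
end
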